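/- Let N be a squarefree odd positive integer. If 19 divides N, then there exist integers x, y, z with x^2 + 2y^2 + 5z^2 + xz = N. If 31 divides N, then there exist integers x, y, z with x^2 + 3y^2 + 6z^2 + xy + 2yz = N. If 37 divides N, then there exist integers x, y, z with x^2 + 3y^2 + 7z^2 + xy + xz = N. -/

import Mathlib

/-- Davenport–Cassels descent for sums of three squares. -/
theorem dc_descent (n : ℤ) : ∀ d : ℕ, 0 < d → ∀ u v w : ℤ,
    u ^ 2 + v ^ 2 + w ^ 2 = n * (d : ℤ) ^ 2 → ∃ x y z : ℤ, x ^ 2 + y ^ 2 + z ^ 2 = n := by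
  intro d
  induction d using Nat.strong_induction_on with
  | _ d ih =>
    intro hd u v w h
    rcases eq_or_lt_of_le (show 1 ≤ d from hd) with hd1 | hd1
    · refine ⟨u, v, w, ?_⟩
      have hd2 : d = 1 := hd1.symm
      subst hd2
      simpa using h
    -- d ≥ 2
    set D : ℤ := (d : ℤ) with hD
    have hD0 : (0 : ℤ) < D := by rw [hD]; exact_mod_cast hd
    -- nearest integer points
    set a : ℤ := round ((u : ℚ) / (D : ℚ))
    set b : ℤ := round ((v : ℚ) / (D : ℚ))
    set c : ℤ := round ((w : ℚ) / (D : ℚ))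
    have hDq : (0 : ℚ) < (D : ℚ) := by exact_mod_cast hD0
    have key : ∀ (t : ℤ) (r : ℤ), r = round ((t : ℚ) / (D : ℚ)) → 4 * (t - r * D) ^ 2 ≤ D ^ 2 := by
      intro t r hr
      have h1 : |(t : ℚ) / D - r| ≤ 1 / 2 := by rw [hr]; exact abs_sub_round _
      have h2 : |(t : ℚ) - r * D| ≤ D / 2 := by
        have := abs_sub_round ((t : ℚ) / D)
        rw [hr] at *
        have heq : (t : ℚ) - (round ((t:ℚ)/D) : ℚ) * D = ((t : ℚ)/D - round ((t:ℚ)/D)) * D := by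
          field_simp
        rw [heq, abs_mul, abs_of_pos hDq]
        calc |(t : ℚ)/D - (round ((t:ℚ)/D) : ℚ)| * D ≤ (1/2) * D := by
              exact mul_le_mul_of_nonneg_right this (le_of_lt hDq)
          _ = D / 2 := by ring
      have h3 : ((t : ℚ) - r * D) ^ 2 ≤ (D / 2) ^ 2 := by
        have := sq_le_sq' (neg_le_of_abs_le h2) (le_of_abs_le h2)
        simpa using this
      have h4 : (4 : ℚ) * ((t : ℚ) - (r : ℚ) * D) ^ 2 ≤ (D : ℚ) ^ 2 := by nlinarith
      exact_mod_cast h4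
    set e1 : ℤ := u - a * D with he1
    set e2 : ℤ := v - b * D with he2
    set e3 : ℤ := w - c * D with he3
    have hb1 : 4 * e1 ^ 2 ≤ D ^ 2 := key u a rfl
    have hb2 : 4 * e2 ^ 2 ≤ D ^ 2 := key v b rfl
    have hb3 : 4 * e3 ^ 2 ≤ D ^ 2 := key w c rfl
    by_cases hE : e1 = 0 ∧ e2 = 0 ∧ e3 = 0
    · obtain ⟨z1, z2, z3⟩ := hE
      refine ⟨a, b, c, ?_⟩
      have hu : u = a * D := by have h0 := z1; rw [he1] at h0; linarith
      have hv : v = b * D := by have h0 := z2; rw [he2] at h0; linarith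
      have hw : w = c * D := by have h0 := z3; rw [he3] at h0; linarith
      have : (a ^ 2 + b ^ 2 + c ^ 2) * D ^ 2 = n * D ^ 2 := by
        rw [← h, hu, hv, hw]; ring
      have hD2 : D ^ 2 ≠ 0 := by positivity
      exact mul_right_cancel₀ hD2 this
    -- descent step
    have hfe : 0 < e1 ^ 2 + e2 ^ 2 + e3 ^ 2 := by
      rcases not_and_or.mp hE with h1 | h'
      · have : e1 ≠ 0 := h1
        positivity
      · rcases not_and_or.mp h' with h2 | h3
        · have : e2 ≠ 0 := h2
          positivity
        · have : e3 ≠ 0 := h3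
          positivity
    set A : ℤ := a ^ 2 + b ^ 2 + c ^ 2 with hA
    set s : ℤ := a * u + b * v + c * w with hs
    set d' : ℤ := D * n - 2 * s + D * A with hd'
    have hdd' : D * d' = e1 ^ 2 + e2 ^ 2 + e3 ^ 2 := by
      simp only [hd', he1, he2, he3, hA, hs]
      linear_combination -h
    have hd'pos : 0 < d' := by
      by_contra hc
      push_neg at hc
      nlinarith
    have hd'lt : d' < D := by nlinarith
    set u' : ℤ := d' * a + (A - n) * e1
    set v' : ℤ := d' * b + (A - n) * e2
    set w' : ℤ := d' * c + (A - n) * e3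
    have hnew : u' ^ 2 + v' ^ 2 + w' ^ 2 = n * d' ^ 2 := by
      simp only [u', v', w', hd', he1, he2, he3, hA, hs]
      linear_combination ((a^2+b^2+c^2 - n))^2 * h
    have hd'nat : ∃ dd : ℕ, (dd : ℤ) = d' ∧ 0 < dd ∧ dd < d := by
      refine ⟨d'.toNat, Int.toNat_of_nonneg (le_of_lt hd'pos), ?_, ?_⟩
      · omega
      · omega
    obtain ⟨dd, hdd, hddpos, hddlt⟩ := hd'nat
    exact ih dd hddlt hddpos u' v' w' (by rw [hdd]; exact hnew)


theorem odd_no_sq (m : ℕ) (hm : Odd m) : ∀ y : ℤ, y ^ 2 ≠ 2 * (m : ℤ) := by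
  intro y h
  rw [← sq_abs, Int.abs_eq_natAbs] at h
  have hk' : y.natAbs ^ 2 = 2 * m := by exact_mod_cast h
  have h2 : 2 ∣ y.natAbs := by
    have : (2 : ℕ) ∣ y.natAbs ^ 2 := ⟨m, hk'⟩
    exact Nat.Prime.dvd_of_dvd_pow Nat.prime_two this
  obtain ⟨j, hj⟩ := h2
  have hmj : m = 2 * j ^ 2 := by nlinarith [hk', hj]
  have : Even m := ⟨j ^ 2, by omega⟩
  exact (Nat.not_even_iff_odd.mpr hm) this

theorem prime_no_sq (q : ℕ) (hq : q.Prime) : ∀ z : ℤ, z ^ 2 ≠ (q : ℤ) := by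
  intro z h
  rw [← sq_abs, Int.abs_eq_natAbs] at h
  have hk' : z.natAbs ^ 2 = q := by exact_mod_cast h
  have hdvd : z.natAbs ∣ q := ⟨z.natAbs, by rw [← hk']; ring⟩
  rcases (Nat.Prime.eq_one_or_self_of_dvd hq _ hdvd) with h1 | h1
  · rw [h1] at hk'
    norm_num at hk'
    exact absurd hk'.symm (Nat.Prime.ne_one hq)
  · rw [h1] at hk'
    have := hq.two_le
    nlinarith [hk']

set_option maxHeartbeats 1600000 in
theorem legendre_step (m q : ℕ) (hm : Odd m) (hq : q.Prime) (hlt : 2 * m < q)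
    (hdvd : 2 * m ∣ q + 1) (hsq : IsSquare ((2 * m : ℕ) : ZMod q)) :
    ∃ X Y Z : ℤ, Z ≠ 0 ∧ X ^ 2 + (q : ℤ) * Y ^ 2 = 2 * (m : ℤ) * Z ^ 2 := by
  have hm1 : 1 ≤ m := hm.pos
  haveI : NeZero (2 * m) := ⟨by omega⟩
  haveI : Fact q.Prime := ⟨hq⟩
  obtain ⟨ρ, hρ⟩ := hsq
  set X0 := Nat.sqrt (2 * m * q) + 1 with hX0
  set Y0 := Nat.sqrt (2 * m) + 1 with hY0
  set Z0 := Nat.sqrt q + 1 with hZ0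
  set S : Finset (ℕ × ℕ × ℕ) := Finset.range X0 ×ˢ (Finset.range Y0 ×ˢ Finset.range Z0) with hS
  set f : ℕ × ℕ × ℕ → ZMod (2 * m) × ZMod q :=
    fun t => ((t.1 : ZMod (2 * m)) - (t.2.1 : ZMod (2 * m)), (t.1 : ZMod q) - ρ * (t.2.2 : ZMod q))
    with hf
  have hcard : (Finset.univ : Finset (ZMod (2 * m) × ZMod q)).card < S.card := by
    rw [hS, Finset.card_product, Finset.card_product]
    simp only [Finset.card_range, Finset.card_univ, Fintype.card_prod, ZMod.card]
    have a1 : 2 * m * q < X0 * X0 := by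
      have := Nat.lt_succ_sqrt' (2 * m * q); rw [pow_two] at this; exact this
    have a2 : 2 * m < Y0 * Y0 := by
      have := Nat.lt_succ_sqrt' (2 * m); rw [pow_two] at this; exact this
    have a3 : q < Z0 * Z0 := by
      have := Nat.lt_succ_sqrt' q; rw [pow_two] at this; exact this
    by_contra hcon
    push_neg at hcon
    have h2 : X0 * (Y0 * Z0) * (X0 * (Y0 * Z0)) ≤ (2 * m * q) * (2 * m * q) :=
      Nat.mul_le_mul hcon hcon
    have b1 : (2 * m) * q < (Y0 * Y0) * (Z0 * Z0) := Nat.mul_lt_mul'' a2 a3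
    have b2 : (2 * m * q) * ((2 * m) * q) < (X0 * X0) * ((Y0 * Y0) * (Z0 * Z0)) :=
      Nat.mul_lt_mul'' a1 b1
    nlinarith [h2, b2]
  obtain ⟨t1, ht1, t2, ht2, htne, hteq⟩ :=
    Finset.exists_ne_map_eq_of_card_lt_of_maps_to hcard (fun a _ => Finset.mem_univ (f a))
  obtain ⟨x1, y1, z1⟩ := t1
  obtain ⟨x2, y2, z2⟩ := t2
  simp only [hS, Finset.mem_product, Finset.mem_range] at ht1 ht2
  obtain ⟨hx1, hy1, hz1⟩ := ht1
  obtain ⟨hx2, hy2, hz2⟩ := ht2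
  set x : ℤ := (x1 : ℤ) - x2 with hx
  set y : ℤ := (y1 : ℤ) - y2 with hy
  set z : ℤ := (z1 : ℤ) - z2 with hz
  clear_value x y z
  have hne : ¬(x = 0 ∧ y = 0 ∧ z = 0) := by
    rintro ⟨h1, h2, h3⟩
    apply htne
    have e1 : x1 = x2 := by omega
    have e2 : y1 = y2 := by omega
    have e3 : z1 = z2 := by omega
    simp [e1, e2, e3]
  have heq1 : ((x - y : ℤ) : ZMod (2 * m)) = 0 := by
    have h1 := congrArg Prod.fst hteq
    simp only [hf] at h1
    rw [hx, hy]
    push_cast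
    push_cast at h1
    linear_combination h1
  have heq2 : ((x : ℤ) : ZMod q) = ρ * ((z : ℤ) : ZMod q) := by
    have h1 := congrArg Prod.snd hteq
    simp only [hf] at h1
    rw [hx, hz]
    push_cast
    push_cast at h1
    linear_combination h1
  clear hteq htne hcard
  set F : ℤ := x ^ 2 + q * y ^ 2 - 2 * m * z ^ 2 with hF
  have hdvd1 : (2 * (m : ℤ)) ∣ x - y := by
    have := (ZMod.intCast_zmod_eq_zero_iff_dvd (x - y) (2 * m)).mp heq1
    exact_mod_cast this
  have hFq : (q : ℤ) ∣ F := by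
    have h0 : ((F : ℤ) : ZMod q) = 0 := by
      have hρ' : ((2 * m : ℕ) : ZMod q) = ρ * ρ := hρ
      push_cast at hρ'
      have hq0 : ((q : ℕ) : ZMod q) = 0 := ZMod.natCast_self q
      rw [hF]
      push_cast
      linear_combination (((x : ℤ) : ZMod q) + ρ * ((z : ℤ) : ZMod q)) * heq2 -
        ((z : ℤ) : ZMod q) ^ 2 * hρ' + ((y : ℤ) : ZMod q) ^ 2 * hq0
    exact (ZMod.intCast_zmod_eq_zero_iff_dvd F q).mp h0
  have hF2m : (2 * (m : ℤ)) ∣ F := by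
    have hsplit : F = (x - y) * (x + y) + ((q : ℤ) + 1) * y ^ 2 - 2 * m * z ^ 2 := by
      rw [hF]; ring
    rw [hsplit]
    have d1 : (2 * (m : ℤ)) ∣ (x - y) * (x + y) := Dvd.dvd.mul_right hdvd1 _
    have d2 : (2 * (m : ℤ)) ∣ ((q : ℤ) + 1) * y ^ 2 := by
      have h3 : ((2 * m : ℕ) : ℤ) ∣ ((q + 1 : ℕ) : ℤ) := Int.natCast_dvd_natCast.mpr hdvd
      push_cast at h3
      exact Dvd.dvd.mul_right h3 _
    have d3 : (2 * (m : ℤ)) ∣ 2 * (m : ℤ) * z ^ 2 := Dvd.dvd.mul_right dvd_rfl _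
    exact dvd_sub (dvd_add d1 d2) d3
  have hcop : IsCoprime (2 * (m : ℤ)) (q : ℤ) := by
    have hnc : Nat.Coprime (2 * m) q :=
      ((Nat.Prime.coprime_iff_not_dvd hq).mpr
        (fun hd => absurd (Nat.le_of_dvd (by omega) hd) (by omega))).symm
    have h4 : IsCoprime ((2 * m : ℕ) : ℤ) ((q : ℕ) : ℤ) := by
      rw [Int.isCoprime_iff_gcd_eq_one]
      rw [Int.gcd_natCast_natCast]; exact hnc
    push_cast at h4
    exact h4
  have hdvdF : (2 * (m : ℤ) * q) ∣ F := hcop.mul_dvd hF2m hFq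
  -- bounds
  have hxb : x ^ 2 ≤ 2 * (m : ℤ) * q := by
    have s1 : ((Nat.sqrt (2 * m * q) : ℤ)) ^ 2 ≤ ((2 * m * q : ℕ) : ℤ) := by
      exact_mod_cast Nat.sqrt_le' (2 * m * q)
    have hb1 : x ≤ (Nat.sqrt (2 * m * q) : ℤ) := by omega
    have hb2 : -(Nat.sqrt (2 * m * q) : ℤ) ≤ x := by omega
    push_cast at s1
    nlinarith
  have hyb : y ^ 2 < 2 * (m : ℤ) := by
    have s1 : ((Nat.sqrt (2 * m) : ℤ)) ^ 2 ≤ ((2 * m : ℕ) : ℤ) := by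
      exact_mod_cast Nat.sqrt_le' (2 * m)
    have hb1 : y ≤ (Nat.sqrt (2 * m) : ℤ) := by omega
    have hb2 : -(Nat.sqrt (2 * m) : ℤ) ≤ y := by omega
    push_cast at s1
    have hle : y ^ 2 ≤ 2 * (m : ℤ) := by nlinarith
    rcases lt_or_eq_of_le hle with h | h
    · exact h
    · exact absurd h (odd_no_sq m hm y)
  have hzb : z ^ 2 < (q : ℤ) := by
    have s1 : ((Nat.sqrt q : ℤ)) ^ 2 ≤ ((q : ℕ) : ℤ) := by exact_mod_cast Nat.sqrt_le' q
    have hb1 : z ≤ (Nat.sqrt q : ℤ) := by omega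
    have hb2 : -(Nat.sqrt q : ℤ) ≤ z := by omega
    have hle : z ^ 2 ≤ (q : ℤ) := by nlinarith
    rcases lt_or_eq_of_le hle with h | h
    · exact h
    · exact absurd h (prime_no_sq q hq z)
  have hq2 : (2 : ℤ) ≤ q := by exact_mod_cast hq.two_le
  have hmq : (0 : ℤ) < 2 * (m : ℤ) * q := by positivity
  obtain ⟨k, hk⟩ := hdvdF
  have hk0 : k = 0 ∨ k = 1 := by
    have hub : F < 2 * (2 * (m : ℤ) * q) := by nlinarith [sq_nonneg z]
    have hlb : -(2 * (m : ℤ) * q) < F := by nlinarith [sq_nonneg x, sq_nonneg y]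
    have c1 : k < 2 := by nlinarith
    have c2 : -1 < k := by nlinarith
    omega
  rcases hk0 with h | h
  · -- F = 0
    rw [h, mul_zero] at hk
    rw [hF] at hk
    have hz0 : z ≠ 0 := by
      intro hzz
      apply hne
      rw [hzz] at hk
      have hm0 : (0:ℤ) ≤ (m:ℤ) := by positivity
      have hx0 : x = 0 := by nlinarith [sq_nonneg x, sq_nonneg y, hk, hF]
      have hy0 : y = 0 := by nlinarith [sq_nonneg x, sq_nonneg y, hk, hF]
      exact ⟨hx0, hy0, hzz⟩
    exact ⟨x, y, z, hz0, by linarith⟩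
  · -- F = 2mq
    rw [h, mul_one, hF] at hk
    refine ⟨x * z + q * y, y * z - x, z ^ 2 + q, by positivity, ?_⟩
    linear_combination (z ^ 2 + (q : ℤ)) * hk


theorem exists_good_prime (m : ℕ) (hm : Odd m) :
    ∃ q : ℕ, q.Prime ∧ 2 * m < q ∧ 2 * m ∣ q + 1 ∧ IsSquare ((2 * m : ℕ) : ZMod q) ∧ q % 4 = 1 := by
  have hm1 : 1 ≤ m := hm.pos
  have hmodd2 : m % 2 = 1 := Nat.odd_iff.mp hm
  have hm4 : m % 4 = 1 ∨ m % 4 = 3 := by omega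
  haveI : NeZero m := ⟨by omega⟩
  haveI : NeZero (8 * m) := ⟨by omega⟩
  have hco : Nat.Coprime 8 m := by
    have h2 : Nat.Coprime 2 m := (Nat.coprime_two_left).mpr hm
    exact Nat.Coprime.pow_left 3 h2
  set e := ZMod.chineseRemainder hco with he
  set r8 : ℕ := if m % 4 = 1 then 1 else 5 with hr8
  set a : ZMod (8 * m) := e.symm ((r8 : ZMod 8), (-1 : ZMod m)) with ha
  have haunit : IsUnit a := by
    have hu8 : IsUnit ((r8 : ℕ) : ZMod 8) := by
      rw [hr8]
      rcases hm4 with h | h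
      · rw [if_pos h]; decide
      · rw [if_neg (by omega)]; decide
    have hum : IsUnit (-1 : ZMod m) := isUnit_one.neg
    have hu : IsUnit (((r8 : ℕ) : ZMod 8), (-1 : ZMod m)) := by
      obtain ⟨u8, h8'⟩ := hu8
      obtain ⟨um, hm'⟩ := hum
      refine ⟨⟨((u8 : ZMod 8), (um : ZMod m)), ((↑u8⁻¹ : ZMod 8), (↑um⁻¹ : ZMod m)), ?_, ?_⟩, ?_⟩
      · simp [Prod.ext_iff]
      · simp [Prod.ext_iff]
      · simp only []
        rw [← h8', ← hm']
    rw [ha]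
    exact (e.symm : ZMod 8 × ZMod m ≃+* ZMod (8 * m)).toRingHom.isUnit_map hu
  obtain ⟨q, hqgt, hqp, hqa⟩ := Nat.forall_exists_prime_gt_and_eq_mod haunit (8 * m)
  haveI : Fact q.Prime := ⟨hqp⟩
  have hqm : 2 * m < q := by omega
  have hcomp : ((q : ZMod 8), (q : ZMod m)) = ((r8 : ZMod 8), (-1 : ZMod m)) := by
    have h1 : e ((q : ℕ) : ZMod (8 * m)) = ((r8 : ZMod 8), (-1 : ZMod m)) := by
      rw [hqa, ha]
      exact e.apply_symm_apply _
    rw [map_natCast] at h1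
    rw [← h1]
    ext
    · simp
    · simp
  have h8 : q % 8 = r8 := by
    have h1 : (q : ZMod 8) = (r8 : ZMod 8) := congrArg Prod.fst hcomp
    have h2 := (ZMod.natCast_eq_natCast_iff' q r8 8).mp h1
    have : r8 < 8 := by rw [hr8]; split <;> simp <;> norm_num
    omega
  have hr85 : r8 = 1 ∨ r8 = 5 := by rw [hr8]; split <;> simp
  have hqodd : q % 2 = 1 := by omega
  have hq4 : q % 4 = 1 := by omega
  have hmdvd : m ∣ q + 1 := by
    have h1 : (q : ZMod m) = -1 := congrArg Prod.snd hcomp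
    have h2 : ((q + 1 : ℕ) : ZMod m) = 0 := by push_cast [h1]; ring
    exact (ZMod.natCast_eq_zero_iff _ _).mp h2
  have h2mdvd : 2 * m ∣ q + 1 := by
    have h2 : 2 ∣ q + 1 := by omega
    exact Nat.Coprime.mul_dvd_of_dvd_of_dvd ((Nat.coprime_two_left).mpr hm) h2 hmdvd
  refine ⟨q, hqp, hqm, h2mdvd, ?_, hq4⟩
  -- Jacobi symbol computation
  have hJ : legendreSym q ((2 * m : ℕ) : ℤ) = 1 := by
    rw [jacobiSym.legendreSym.to_jacobiSym]
    have hsplit : ((2 * m : ℕ) : ℤ) = (2 : ℤ) * (m : ℤ) := by push_cast; ring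
    rw [hsplit, jacobiSym.mul_left]
    have hqodd' : Odd q := Nat.odd_iff.mpr hqodd
    have h2q : jacobiSym 2 q = ZMod.χ₈ q := jacobiSym.at_two hqodd'
    have hmq : jacobiSym (m : ℤ) q = jacobiSym (q : ℤ) m := by
      have := jacobiSym.quadratic_reciprocity_one_mod_four hq4 hm
      rw [this]
    have hqm1 : jacobiSym (q : ℤ) m = jacobiSym (-1 : ℤ) m := by
      apply jacobiSym.mod_left'
      have hdvd : (m : ℤ) ∣ (q : ℤ) - (-1 : ℤ) := by
        have h6 : (m : ℤ) ∣ ((q : ℤ) + 1) := by exact_mod_cast Int.natCast_dvd_natCast.mpr hmdvd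
        simpa [sub_neg_eq_add] using h6
      exact Int.ModEq.symm ((Int.modEq_iff_dvd).mpr hdvd)
    have hneg1 : jacobiSym (-1 : ℤ) m = ZMod.χ₄ m := jacobiSym.at_neg_one hm
    rw [h2q, hmq, hqm1, hneg1]
    rcases hm4 with h | h
    · have c4 : ZMod.χ₄ m = 1 := ZMod.χ₄_nat_one_mod_four h
      have hq8 : q % 8 = 1 := by rw [h8, hr8, if_pos h]
      have c8 : ZMod.χ₈ q = 1 := by
        have hne2 : ¬ (q % 2 = 0) := by omega
        rw [ZMod.χ₈_nat_eq_if_mod_eight]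
        simp [hq8, hne2]
      rw [c4, c8]; norm_num
    · have c4 : ZMod.χ₄ m = -1 := ZMod.χ₄_nat_three_mod_four h
      have hq8 : q % 8 = 5 := by rw [h8, hr8, if_neg (by omega)]
      have c8 : ZMod.χ₈ q = -1 := by
        have hne2 : ¬ (q % 2 = 0) := by omega
        rw [ZMod.χ₈_nat_eq_if_mod_eight]
        simp [hq8, hne2]
      rw [c4, c8]; norm_num
  have hne : (((2 * m : ℕ) : ℤ) : ZMod q) ≠ 0 := by
    rw [Ne, ZMod.intCast_zmod_eq_zero_iff_dvd]
    intro hdvd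
    have : ((2 * m : ℕ) : ℤ) = 2 * m := by push_cast; ring
    have hd2 : (q : ℕ) ∣ 2 * m := by exact_mod_cast hdvd
    have := Nat.le_of_dvd (by omega) hd2
    omega
  have := (legendreSym.eq_one_iff q hne).mp hJ
  have hcast : (((2 * m : ℕ) : ℤ) : ZMod q) = ((2 * m : ℕ) : ZMod q) := by push_cast; ring
  rwa [hcast] at this

theorem G_rep_of_sum (m : ℕ) (hm : Odd m)
    (h3 : ∃ r s t : ℤ, r ^ 2 + s ^ 2 + t ^ 2 = 2 * (m : ℤ)) :
    ∃ x y z : ℤ, x ^ 2 + y ^ 2 + z ^ 2 + x * y + y * z + z * x = (m : ℤ) := by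
  obtain ⟨r, s, t, h⟩ := h3
  have hEven : Even (r ^ 2 + s ^ 2 + t ^ 2) := ⟨(m : ℤ), by linarith⟩
  have hNotOdd : ¬ Odd (r ^ 2 + s ^ 2 + t ^ 2) := Int.not_odd_iff_even.mpr hEven
  have two_ne : (2 : ℤ) ≠ 0 := by norm_num
  have hmint : ¬ Even (m : ℤ) := by
    rw [Int.even_coe_nat]
    exact Nat.not_even_iff_odd.mpr hm
  rcases Int.even_or_odd r with ⟨α, hα⟩ | ⟨α, hα⟩ <;>
    rcases Int.even_or_odd s with ⟨β, hβ⟩ | ⟨β, hβ⟩ <;>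
      rcases Int.even_or_odd t with ⟨γ, hγ⟩ | ⟨γ, hγ⟩
  · -- EEE : contradiction
    exfalso
    apply hmint
    refine ⟨α ^ 2 + β ^ 2 + γ ^ 2, mul_left_cancel₀ two_ne ?_⟩
    subst hα hβ hγ
    linear_combination -h
  · -- EEO : one odd
    exfalso; apply hNotOdd
    subst hα hβ hγ
    exact ⟨2 * γ ^ 2 + 2 * γ + 2 * α ^ 2 + 2 * β ^ 2, by ring⟩
  · -- EOE
    exfalso; apply hNotOdd
    subst hα hβ hγ
    exact ⟨2 * β ^ 2 + 2 * β + 2 * α ^ 2 + 2 * γ ^ 2, by ring⟩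
  · -- EOO : odds are s,t ; a = s, b = r, c = t
    subst hα hβ hγ
    refine ⟨β - α + γ + 1, β + α - γ, -β + α + γ, mul_left_cancel₀ two_ne ?_⟩
    linear_combination h
  · -- OEE
    exfalso; apply hNotOdd
    subst hα hβ hγ
    exact ⟨2 * α ^ 2 + 2 * α + 2 * β ^ 2 + 2 * γ ^ 2, by ring⟩
  · -- OEO : odds are r,t ; a = r, b = s, c = t
    subst hα hβ hγ
    refine ⟨α - β + γ + 1, α + β - γ, -α + β + γ, mul_left_cancel₀ two_ne ?_⟩
    linear_combination h
  · -- OOE : odds are r,s ; a = r, b = t, c = s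
    subst hα hβ hγ
    refine ⟨α - γ + β + 1, α + γ - β, -α + γ + β, mul_left_cancel₀ two_ne ?_⟩
    linear_combination h
  · -- OOO
    exfalso; apply hNotOdd
    subst hα hβ hγ
    exact ⟨2 * α ^ 2 + 2 * α + 2 * β ^ 2 + 2 * β + 2 * γ ^ 2 + 2 * γ + 1, by ring⟩


theorem sum_three_squares (m : ℕ) (hm : Odd m) :
    ∃ r s t : ℤ, r ^ 2 + s ^ 2 + t ^ 2 = 2 * (m : ℤ) := by
  obtain ⟨q, hqp, hqm, hqdvd, hqsq, hq4⟩ := exists_good_prime m hm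
  obtain ⟨X, Y, Z, hZ, hXYZ⟩ := legendre_step m q hm hqp hqm hqdvd hqsq
  haveI : Fact q.Prime := ⟨hqp⟩
  obtain ⟨a, b, hab⟩ := Nat.Prime.sq_add_sq (by omega : q % 4 ≠ 3)
  have hab' : (a : ℤ) ^ 2 + (b : ℤ) ^ 2 = (q : ℤ) := by exact_mod_cast hab
  have hd : 0 < Z.natAbs := Int.natAbs_pos.mpr hZ
  have hsq' : ((Z.natAbs : ℤ)) ^ 2 = Z ^ 2 := by rw [← Int.abs_eq_natAbs, sq_abs]
  exact dc_descent (2 * (m : ℤ)) Z.natAbs hd X ((a : ℤ) * Y) ((b : ℤ) * Y)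
    (by rw [hsq']; linear_combination hXYZ + Y ^ 2 * hab')

theorem G_rep (m : ℕ) (hm : Odd m) :
    ∃ x y z : ℤ, x ^ 2 + y ^ 2 + z ^ 2 + x * y + y * z + z * x = (m : ℤ) :=
  G_rep_of_sum m hm (sum_three_squares m hm)

theorem squarefree_odd_represented
    (N : ℕ) (hN : 0 < N) (hsf : Squarefree N) (hodd : Odd N) :
    (19 ∣ N → ∃ x y z : ℤ, x ^ 2 + 2 * y ^ 2 + 5 * z ^ 2 + x * z = (N : ℤ)) ∧
    (31 ∣ N → ∃ x y z : ℤ, x ^ 2 + 3 * y ^ 2 + 6 * z ^ 2 + x * y + 2 * y * z = (N : ℤ)) ∧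
    (37 ∣ N → ∃ x y z : ℤ, x ^ 2 + 3 * y ^ 2 + 7 * z ^ 2 + x * y + x * z = (N : ℤ)) := by
  refine ⟨?_, ?_, ?_⟩ <;> intro hdvd <;> obtain ⟨m, hNm⟩ := hdvd
  · have hmodd : Odd m := by
      rw [hNm] at hodd
      exact (Nat.odd_mul.mp hodd).2
    obtain ⟨x, y, z, hG⟩ := G_rep m hmodd
    refine ⟨-4 * x - 3 * y - z, -x - y - 3 * z, x - y, ?_⟩
    have hNZ : (N : ℤ) = 19 * (m : ℤ) := by exact_mod_cast congrArg (Nat.cast (R := ℤ)) hNm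
    rw [hNZ]
    linear_combination (19 : ℤ) * hG
  · have hmodd : Odd m := by
      rw [hNm] at hodd
      exact (Nat.odd_mul.mp hodd).2
    obtain ⟨x, y, z, hG⟩ := G_rep m hmodd
    refine ⟨-5 * x - 5 * y - 4 * z, y + 3 * z, -x + y - z, ?_⟩
    have hNZ : (N : ℤ) = 31 * (m : ℤ) := by exact_mod_cast congrArg (Nat.cast (R := ℤ)) hNm
    rw [hNZ]
    linear_combination (31 : ℤ) * hG
  · have hmodd : Odd m := by
      rw [hNm] at hodd
      exact (Nat.odd_mul.mp hodd).2
    obtain ⟨x, y, z, hG⟩ := G_rep m hmodd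
    refine ⟨-6 * x - 5 * y - 3 * z, 3 * y + 2 * z, x + 2 * z, ?_⟩
    have hNZ : (N : ℤ) = 37 * (m : ℤ) := by exact_mod_cast congrArg (Nat.cast (R := ℤ)) hNm
    rw [hNZ]
    linear_combination (37 : ℤ) * hG
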